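/- Let ρ : L^p(F_T) → ℝ, p ∈ [1,∞), be a convex risk measure with minimal penalty α(Q) := sup_{X ∈ L^p}(E_Q[−X] − ρ(X)) admitting the representation ρ(X) = sup_{Q ∈ 𝒬}(E_Q[−X] − α(Q)) over 𝒬 := {Q ∼ P : α(Q) < ∞}. If in addition ρ(X) ≤ K‖X‖_p + C for all X, then every Q ∈ 𝒬 satisfies E_Q[X] ≤ K‖X‖_p for all X ∈ L^p(F_T), i.e. 𝒬 ⊆ {Q ≪ P : dQ/dP ∈ L^q, ‖dQ/dP‖_q ≤ K} with q = p/(p−1). -/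

import Mathlib

open MeasureTheory
open scoped ENNReal

private lemma coe_nnnorm_toReal {x : ℝ≥0∞} (hx : x ≠ ∞) :
    (‖x.toReal‖₊ : ℝ≥0∞) = x := by
  rw [← enorm_eq_nnnorm, ← ofReal_norm, Real.norm_of_nonneg ENNReal.toReal_nonneg,
    ENNReal.ofReal_toReal hx]

private lemma convHolder {Ω : Type*} {m0 : MeasurableSpace Ω} (P : Measure Ω)
    [IsProbabilityMeasure P] (W : Ω → ℝ≥0∞) (hW : Measurable W)
    (hWfin : ∀ᵐ ω ∂P, W ω < ∞) (p q : ℝ≥0∞) (hp : 1 ≤ p) (hp' : p ≠ ∞)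
    (hpq : 1 / p + 1 / q = 1) (K : ℝ) (hK : 0 ≤ K)
    (H : ∀ g : Ω → ℝ≥0∞, Measurable g → (∃ c : ℝ≥0∞, c ≠ ∞ ∧ ∀ ω, g ω ≤ c) →
      ∫⁻ ω, W ω * g ω ∂P ≤ ENNReal.ofReal K * eLpNorm (fun ω => (g ω).toReal) p P) :
    eLpNorm (fun ω => (W ω).toReal) q P ≤ ENNReal.ofReal K := by
  have hp0 : p ≠ 0 := by positivity
  rcases eq_or_lt_of_le hp with h1 | h1
  · -- p = 1, q = ∞
    have hq : q = ∞ := by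
      have h3 : (1:ℝ≥0∞) + 1 / q = 1 := by
        calc (1:ℝ≥0∞) + 1/q = 1/p + 1/q := by rw [← h1]; norm_num
          _ = 1 := hpq
      have h4 : 1 / q = 0 := (ENNReal.add_right_inj (a := (1:ℝ≥0∞)) (by norm_num)).mp
        (by rw [h3, add_zero])
      simpa [one_div, ENNReal.inv_eq_zero] using h4
    subst hq
    rw [eLpNorm_exponent_top]
    apply eLpNormEssSup_le_of_ae_bound (C := K)
    have hnull : ∀ n : ℕ, P {ω | ENNReal.ofReal K + (↑(n+1) : ℝ≥0∞)⁻¹ ≤ W ω} = 0 := by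
      intro n
      set ε : ℝ≥0∞ := (↑(n+1) : ℝ≥0∞)⁻¹ with hε
      set A := {ω | ENNReal.ofReal K + ε ≤ W ω} with hAdef
      have hA : MeasurableSet A := measurableSet_le measurable_const hW
      have hεpos : ε ≠ 0 := by simp [hε]
      have hg := H (A.indicator fun _ => 1) (measurable_const.indicator hA)
        ⟨1, by norm_num, fun ω => Set.indicator_le_self' (fun _ _ => zero_le_one) ω⟩
      have htoReal : (fun ω => ((A.indicator (fun _ => (1:ℝ≥0∞)) ω)).toReal)
          = A.indicator fun _ => (1:ℝ) := by
        ext ω; by_cases h : ω ∈ A <;> simp [h]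
      rw [htoReal] at hg
      have hsnorm : eLpNorm (A.indicator fun _ => (1:ℝ)) 1 P = P A := by
        rw [eLpNorm_one_eq_lintegral_enorm]
        simp [enorm_indicator_eq_indicator_enorm, lintegral_indicator hA]
      have hlhs : (ENNReal.ofReal K + ε) * P A ≤ ∫⁻ ω, W ω * A.indicator (fun _ => 1) ω ∂P := by
        have : ∫⁻ ω, W ω * A.indicator (fun _ => 1) ω ∂P = ∫⁻ ω in A, W ω ∂P := by
          rw [← lintegral_indicator hA]
          congr 1; ext ω; by_cases h : ω ∈ A <;> simp [h]
        rw [this, ← setLIntegral_const A]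
        exact setLIntegral_mono' hA fun ω hω => hω
      rw [← h1, hsnorm] at hg
      have hfin : ENNReal.ofReal K * P A ≠ ∞ :=
        ENNReal.mul_ne_top ENNReal.ofReal_ne_top (measure_ne_top P A)
      have hle : ENNReal.ofReal K * P A + ε * P A ≤ ENNReal.ofReal K * P A + 0 := by
        calc ENNReal.ofReal K * P A + ε * P A = (ENNReal.ofReal K + ε) * P A := by ring
          _ ≤ ENNReal.ofReal K * P A := le_trans hlhs hg
          _ = ENNReal.ofReal K * P A + 0 := by rw [add_zero]
      have : ε * P A ≤ 0 := (ENNReal.add_le_add_iff_left hfin).mp hle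
      rcases mul_eq_zero.mp (le_antisymm this (zero_le)) with h | h
      · exact absurd h hεpos
      · exact h
    have hae : ∀ᵐ ω ∂P, ∀ n : ℕ, ¬ (ENNReal.ofReal K + (↑(n+1) : ℝ≥0∞)⁻¹ ≤ W ω) := by
      rw [ae_all_iff]
      intro n
      simpa [ae_iff] using hnull n
    filter_upwards [hae, hWfin] with ω hω hfin
    have hWle : W ω ≤ ENNReal.ofReal K := by
      apply ENNReal.le_of_forall_pos_le_add
      intro δ hδ _
      obtain ⟨n, hn⟩ := ENNReal.exists_inv_nat_lt (a := (δ : ℝ≥0∞)) (by simpa using hδ.ne')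
      have h2 : (↑(n+1) : ℝ≥0∞)⁻¹ ≤ (↑n : ℝ≥0∞)⁻¹ := by
        apply ENNReal.inv_le_inv.mpr; exact_mod_cast Nat.le_succ n
      have := hω n
      push_neg at this
      exact le_trans this.le (by exact add_le_add_right (le_trans h2 hn.le) _)
    rw [Real.norm_of_nonneg ENNReal.toReal_nonneg]
    calc (W ω).toReal ≤ (ENNReal.ofReal K).toReal :=
          ENNReal.toReal_mono ENNReal.ofReal_ne_top hWle
      _ = K := ENNReal.toReal_ofReal hK
  · -- 1 < p
    have hq0 : q ≠ 0 := by
      intro h; rw [h] at hpq; simp at hpq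
    have hq' : q ≠ ∞ := by
      intro h; rw [h] at hpq; simp [one_div, ENNReal.inv_eq_one] at hpq
      exact h1.ne' hpq
    set pr := p.toReal with hprdef
    set r := q.toReal with hrdef
    have hpr1 : 1 < pr := by
      have := (ENNReal.toReal_lt_toReal (by norm_num) hp').mpr h1
      simpa using this
    have hconj : pr.HolderConjugate r := by
      rw [Real.holderConjugate_iff]; constructor
      · exact hpr1
      · have h2 := congrArg ENNReal.toReal hpq
        rw [ENNReal.toReal_add (by simp [hp0]) (by simp [hq0])] at h2
        simpa [one_div, ENNReal.toReal_inv] using h2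
    have hr1 : 1 < r := hconj.symm.lt
    have hr0 : 0 < r := lt_trans one_pos hr1
    -- truncations
    set Wn : ℕ → Ω → ℝ≥0∞ := fun n ω => min (W ω) n with hWndef
    have hWnmeas : ∀ n, Measurable (Wn n) := fun n => hW.min measurable_const
    set Sn : ℕ → ℝ≥0∞ := fun n => ∫⁻ ω, (Wn n ω) ^ r ∂P with hSndef
    have hSnfin : ∀ n, Sn n ≠ ∞ := by
      intro n
      have : Sn n ≤ (n : ℝ≥0∞) ^ r := by
        rw [hSndef]
        calc ∫⁻ ω, (Wn n ω) ^ r ∂P ≤ ∫⁻ _, (n : ℝ≥0∞) ^ r ∂P :=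
            lintegral_mono fun ω => ENNReal.rpow_le_rpow (min_le_right _ _) hr0.le
          _ = (n : ℝ≥0∞) ^ r := by simp
      exact ne_top_of_le_ne_top (ENNReal.rpow_lt_top_of_nonneg hr0.le (by simp)).ne this
    have hkey : ∀ n, Sn n ≤ ENNReal.ofReal K * (Sn n) ^ (1 / pr) := by
      intro n
      have hgmeas : Measurable fun ω => (Wn n ω) ^ (r - 1) :=
        ENNReal.continuous_rpow_const.measurable.comp (hWnmeas n)
      have hgbd : ∀ ω, (Wn n ω) ^ (r - 1) ≤ (n : ℝ≥0∞) ^ (r - 1) := fun ω =>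
        ENNReal.rpow_le_rpow (min_le_right _ _) (by linarith)
      have hbdne : ((n : ℝ≥0∞) ^ (r - 1)) ≠ ∞ :=
        (ENNReal.rpow_lt_top_of_nonneg (by linarith) (by simp)).ne
      have hg := H (fun ω => (Wn n ω) ^ (r - 1)) hgmeas ⟨_, hbdne, hgbd⟩
      have hlhs : Sn n ≤ ∫⁻ ω, W ω * (Wn n ω) ^ (r - 1) ∂P := by
        rw [hSndef]
        apply lintegral_mono
        intro ω
        calc (Wn n ω) ^ r = (Wn n ω) ^ (1 + (r - 1)) := by norm_num
          _ = (Wn n ω) ^ (1:ℝ) * (Wn n ω) ^ (r - 1) :=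
            ENNReal.rpow_add_of_nonneg _ _ zero_le_one (by linarith)
          _ ≤ W ω * (Wn n ω) ^ (r - 1) := by
            rw [ENNReal.rpow_one]
            exact mul_le_mul_left (min_le_left _ _) _
      have hsnorm : eLpNorm (fun ω => ((Wn n ω) ^ (r - 1)).toReal) p P = (Sn n) ^ (1 / pr) := by
        rw [eLpNorm_eq_lintegral_rpow_enorm_toReal hp0 hp', hSndef]
        congr 1
        apply lintegral_congr
        intro ω
        have hne : (Wn n ω) ^ (r - 1) ≠ ∞ := ne_top_of_le_ne_top hbdne (hgbd ω)
        rw [enorm_eq_nnnorm, coe_nnnorm_toReal hne, ← ENNReal.rpow_mul, ← hprdef,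
          hconj.symm.sub_one_mul_conj]
      rw [hsnorm] at hg
      exact le_trans hlhs hg
    have hkey2 : ∀ n, Sn n ≤ (ENNReal.ofReal K) ^ r := by
      intro n
      by_cases h0 : Sn n = 0
      · rw [h0]; exact zero_le
      have hle : (Sn n) ^ (1 / r) ≤ ENNReal.ofReal K := by
        have h2 : (Sn n) ^ (1:ℝ) * (Sn n) ^ (-(1 / pr)) ≤
            (ENNReal.ofReal K * (Sn n) ^ (1 / pr)) * (Sn n) ^ (-(1 / pr)) :=
          mul_le_mul_left (by rw [ENNReal.rpow_one]; exact hkey n) _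
        have h3 : (ENNReal.ofReal K * (Sn n) ^ (1 / pr)) * (Sn n) ^ (-(1 / pr))
            = ENNReal.ofReal K := by
          rw [mul_assoc, ← ENNReal.rpow_add _ _ h0 (hSnfin n)]
          norm_num
        have h4 : (Sn n) ^ (1:ℝ) * (Sn n) ^ (-(1 / pr)) = (Sn n) ^ (1 / r) := by
          rw [← ENNReal.rpow_add _ _ h0 (hSnfin n)]
          congr 1
          have h5 : 1/pr = 1 - 1/r := by
            rw [one_div, one_div]
            linarith [hconj.inv_add_inv_eq_one]
          rw [h5]; ring
        rw [h4, h3] at h2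
        exact h2
      calc Sn n = ((Sn n) ^ (1 / r)) ^ r := by
            rw [← ENNReal.rpow_mul, one_div_mul_cancel hr0.ne', ENNReal.rpow_one]
        _ ≤ (ENNReal.ofReal K) ^ r := ENNReal.rpow_le_rpow hle hr0.le
    -- conclude
    rw [eLpNorm_eq_lintegral_rpow_enorm_toReal hq0 hq']
    simp only [enorm_eq_nnnorm]
    have hint : ∫⁻ ω, (‖(W ω).toReal‖₊ : ℝ≥0∞) ^ r ∂P = ∫⁻ ω, (W ω) ^ r ∂P := by
      apply lintegral_congr_ae
      filter_upwards [hWfin] with ω hfin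
      rw [coe_nnnorm_toReal hfin.ne]
    have hmono2 : ∫⁻ ω, (W ω) ^ r ∂P = ⨆ n, Sn n := by
      have hmeas : ∀ n, Measurable fun ω => (Wn n ω) ^ r := fun n =>
        ENNReal.continuous_rpow_const.measurable.comp (hWnmeas n)
      have hmon : Monotone fun n (ω : Ω) => (Wn n ω) ^ r := fun a b hab ω =>
        ENNReal.rpow_le_rpow (min_le_min le_rfl (by exact_mod_cast Nat.cast_le.mpr hab)) hr0.le
      have heq : ∀ ω, (⨆ n, (Wn n ω) ^ r) = (W ω) ^ r := by
        intro ω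
        have hsup : (⨆ n, Wn n ω) = W ω := by
          apply le_antisymm (iSup_le fun n => min_le_left _ _)
          rcases eq_or_ne (W ω) ∞ with h | h
          · calc W ω = ⨆ n : ℕ, (n : ℝ≥0∞) := by rw [h, ENNReal.iSup_natCast]
              _ ≤ ⨆ n, Wn n ω := iSup_mono fun n => le_min (by rw [h]; exact le_top) le_rfl
          · obtain ⟨n, hn⟩ := ENNReal.exists_nat_gt h
            exact le_trans (le_min le_rfl hn.le) (le_iSup (fun n : ℕ => Wn n ω) n)
        calc (⨆ n, (Wn n ω) ^ r) = (⨆ n, Wn n ω) ^ r :=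
            ((ENNReal.monotone_rpow_of_nonneg hr0.le).map_iSup_of_continuousAt
              ENNReal.continuous_rpow_const.continuousAt
              (by simp [ENNReal.zero_rpow_of_pos hr0])).symm
          _ = (W ω) ^ r := by rw [hsup]
      calc ∫⁻ ω, (W ω) ^ r ∂P = ∫⁻ ω, ⨆ n, (Wn n ω) ^ r ∂P :=
            lintegral_congr fun ω => (heq ω).symm
        _ = ⨆ n, ∫⁻ ω, (Wn n ω) ^ r ∂P := lintegral_iSup hmeas hmon
        _ = ⨆ n, Sn n := rfl
    rw [hint, hmono2]
    calc (⨆ n, Sn n) ^ (1 / r) ≤ ((ENNReal.ofReal K) ^ r) ^ (1 / r) :=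
        ENNReal.rpow_le_rpow (iSup_le hkey2) (by positivity)
      _ = ENNReal.ofReal K := by
        rw [← ENNReal.rpow_mul, mul_one_div_cancel hr0.ne', ENNReal.rpow_one]

/-- let `ρ : L^p → ℝ` be a convex risk measure with minimal
penalty `pen` admitting the representation
`ρ(X) = sup_{Q ∈ 𝒬} (E_Q[-X] - pen(Q))` over `𝒬 = {Q ∼ P : pen(Q) < ∞}`.
If moreover `ρ(X) ≤ K‖X‖_p + C`, then every `Q ∈ 𝒬` satisfies
`E_Q[X] ≤ K‖X‖_p` for all `X ∈ L^p`, i.e. `dQ/dP ∈ L^q` with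
`‖dQ/dP‖_q ≤ K`. -/
theorem stmt19 {Ω : Type*} {m0 : MeasurableSpace Ω} (P : Measure Ω) [IsProbabilityMeasure P]
    (p q : ℝ≥0∞) (hp : 1 ≤ p) (hp' : p ≠ ∞) (hpq : 1 / p + 1 / q = 1)
    (ρ : (Ω → ℝ) → ℝ)
    (hconv : ∀ (X Y : Ω → ℝ) (l : ℝ), MemLp X p P → MemLp Y p P → 0 ≤ l → l ≤ 1 →
      ρ (fun ω => l * X ω + (1 - l) * Y ω) ≤ l * ρ X + (1 - l) * ρ Y)
    (hmono : ∀ X Y : Ω → ℝ, MemLp X p P → MemLp Y p P →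
      (∀ᵐ ω ∂P, Y ω ≤ X ω) → ρ X ≤ ρ Y)
    (htrans : ∀ (X : Ω → ℝ) (c : ℝ), MemLp X p P → ρ (fun ω => X ω + c) = ρ X - c)
    (K C : ℝ) (hK : 0 < K)
    (hgrowth : ∀ X : Ω → ℝ, MemLp X p P → ρ X ≤ K * (eLpNorm X p P).toReal + C)
    -- the minimal penalty
    (pen : Measure Ω → ℝ)
    (hpen : ∀ Q : Measure Ω,
      pen Q = ⨆ X : {X : Ω → ℝ // MemLp X p P}, ((∫ ω, -(X.1 ω) ∂Q) - ρ X.1))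
    -- the set 𝒬 of equivalent measures with finite minimal penalty
    (QQ : Set (Measure Ω))
    (hQQ : QQ = {Q | IsProbabilityMeasure Q ∧ Q ≪ P ∧ P ≪ Q ∧
      BddAbove (Set.range fun X : {X : Ω → ℝ // MemLp X p P} =>
        (∫ ω, -(X.1 ω) ∂Q) - ρ X.1)})
    -- the dual representation of ρ over 𝒬
    (hrep : ∀ X : Ω → ℝ, MemLp X p P →
      ρ X = ⨆ Q : QQ, ((∫ ω, -(X ω) ∂(Q.1)) - pen Q.1)) :
    ∀ Q ∈ QQ,
      (∀ X : Ω → ℝ, MemLp X p P → ∫ ω, X ω ∂Q ≤ K * (eLpNorm X p P).toReal) ∧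
      eLpNorm (fun ω => (Q.rnDeriv P ω).toReal) q P ≤ ENNReal.ofReal K := by
  intro Q hQ
  rw [hQQ] at hQ
  obtain ⟨hQprob, hQP, hPQ, hbdd⟩ := hQ
  haveI := hQprob
  -- Step 1
  have claim1 : ∀ X : Ω → ℝ, MemLp X p P → ∫ ω, X ω ∂Q ≤ K * (eLpNorm X p P).toReal := by
    intro X hX
    have hpe : ∀ (Y : Ω → ℝ) (hY : MemLp Y p P), (∫ ω, -(Y ω) ∂Q) - ρ Y ≤ pen Q := by
      intro Y hY
      rw [hpen]
      exact le_ciSup hbdd ⟨Y, hY⟩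
    set nX : ℝ := (eLpNorm X p P).toReal with hnX
    have hbound : ∀ n : ℕ, ∫ ω, X ω ∂Q ≤ K * nX + (pen Q + C) / ((n : ℝ) + 1) := by
      intro n
      set c : ℝ := (n : ℝ) + 1 with hc
      have hcpos : (0 : ℝ) < c := by positivity
      have hY : MemLp (fun ω => -c * X ω) p P := hX.const_mul (-c)
      have hsmul : (fun ω => -c * X ω) = (-c) • X := by
        funext ω; simp [smul_eq_mul]
      have h1 : ∫ ω, -(-c * X ω) ∂Q = c * ∫ ω, X ω ∂Q := by
        rw [← integral_const_mul]
        congr 1; funext ω; ring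
      have h2 : (eLpNorm (fun ω => -c * X ω) p P).toReal = c * nX := by
        rw [hsmul, eLpNorm_const_smul, ENNReal.toReal_mul, enorm_eq_nnnorm, ENNReal.coe_toReal,
          coe_nnnorm, Real.norm_of_nonpos (by linarith), hnX]
        ring
      have h3 := hgrowth _ hY
      rw [h2] at h3
      have h4 := hpe _ hY
      rw [h1] at h4
      have hmain : c * ∫ ω, X ω ∂Q ≤ pen Q + (K * (c * nX) + C) := by linarith
      rw [← sub_le_iff_le_add', le_div_iff₀ hcpos]
      nlinarith [hmain]
    have hlim : Filter.Tendsto (fun n : ℕ => K * nX + (pen Q + C) / ((n : ℝ) + 1))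
        Filter.atTop (nhds (K * nX + 0)) := by
      apply Filter.Tendsto.add tendsto_const_nhds
      apply Filter.Tendsto.div_atTop tendsto_const_nhds
      exact Filter.tendsto_atTop_add_const_right _ 1 tendsto_natCast_atTop_atTop
    have := ge_of_tendsto' hlim hbound
    linarith
  refine ⟨claim1, ?_⟩
  -- Step 2 via converse Hölder
  apply convHolder P (Q.rnDeriv P) (Measure.measurable_rnDeriv Q P)
    (Measure.rnDeriv_lt_top Q P) p q hp hp' hpq K hK.le
  intro g hg hgbd
  obtain ⟨c, hc, hgc⟩ := hgbd
  have hXm : MemLp (fun ω => (g ω).toReal) p P := by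
    apply MemLp.of_bound (ENNReal.measurable_toReal.comp hg).aestronglyMeasurable c.toReal
    apply ae_of_all
    intro ω
    simp only [Function.comp_apply]
    rw [Real.norm_of_nonneg ENNReal.toReal_nonneg]
    exact ENNReal.toReal_mono hc (hgc ω)
  have h1 : ∫⁻ ω, Q.rnDeriv P ω * g ω ∂P = ∫⁻ ω, g ω ∂Q :=
    lintegral_rnDeriv_mul hQP hg.aemeasurable
  have h2 : ∫⁻ ω, g ω ∂Q ≠ ∞ := by
    apply ne_top_of_le_ne_top (b := c * Q Set.univ)
    · exact ENNReal.mul_ne_top hc (measure_ne_top Q _)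
    · calc ∫⁻ ω, g ω ∂Q ≤ ∫⁻ _, c ∂Q := lintegral_mono hgc
        _ = c * Q Set.univ := by rw [lintegral_const]
  have h3 : ∫ ω, (g ω).toReal ∂Q = (∫⁻ ω, g ω ∂Q).toReal := by
    rw [integral_eq_lintegral_of_nonneg_ae (ae_of_all _ fun ω => ENNReal.toReal_nonneg)
      (ENNReal.measurable_toReal.comp hg).aestronglyMeasurable]
    congr 1
    apply lintegral_congr
    intro ω
    exact ENNReal.ofReal_toReal (ne_top_of_le_ne_top hc (hgc ω))
  rw [h1]
  calc ∫⁻ ω, g ω ∂Q = ENNReal.ofReal (∫ ω, (g ω).toReal ∂Q) := by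
        rw [h3, ENNReal.ofReal_toReal h2]
    _ ≤ ENNReal.ofReal (K * (eLpNorm (fun ω => (g ω).toReal) p P).toReal) :=
        ENNReal.ofReal_le_ofReal (claim1 _ hXm)
    _ = ENNReal.ofReal K * ENNReal.ofReal ((eLpNorm (fun ω => (g ω).toReal) p P).toReal) := by
        rw [ENNReal.ofReal_mul hK.le]
    _ = ENNReal.ofReal K * eLpNorm (fun ω => (g ω).toReal) p P := by
        rw [ENNReal.ofReal_toReal hXm.eLpNorm_ne_top]
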